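/- Fix an integer r ≥ 2 and reals 0 < γ₃ < γ₄ < γ₅ such that B := γ₄ − γ₃ − log_r 2 > 0, and set A := γ₅ − γ₄ + log_r 2. If Γ is a finite tree in which every node has at most r^{γ₅} children, then at least one of the following holds: (I) at least r^{γ₃} children Q of the root satisfy H_r^{γ₄}(Γ_Q) ≥ H_r^{γ₄}(Γ) · r^{−A}; or (II) at least one child Q of the root satisfies H_r^{γ₄}(Γ_Q) ≥ H_r^{γ₄}(Γ) · r^{B}. -/

import Mathlib

/-- A finite tree of height `N`, encoded as a finite set of words: a node of height `n` is a
list of length `n`, the root is `[]`, and the parent of a nonempty word is its tail.  The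
conditions say that the root belongs to the tree, all nodes have height at most `N`, the set is
closed under taking parents, and every node of height `< N` has a child (so the parent function
maps each level onto the previous one and all leaves have height `N`). -/
def IsLTree (N : ℕ) (Γ : Finset (List ℕ)) : Prop :=
  [] ∈ Γ ∧ (∀ w ∈ Γ, w.length ≤ N) ∧ (∀ w ∈ Γ, w ≠ [] → w.tail ∈ Γ) ∧
    (∀ w ∈ Γ, w.length < N → ∃ a : ℕ, a :: w ∈ Γ)

/-- The children of the node `w` in the tree `Γ`. -/
def children (Γ : Finset (List ℕ)) (w : List ℕ) : Finset (List ℕ) :=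
  Γ.filter fun v => v ≠ [] ∧ v.tail = w

/-- A cut of the tree `Γ` (of height `N`): a set of nodes meeting, for every leaf, the path
from that leaf to the root. -/
def IsCut (N : ℕ) (Γ C : Finset (List ℕ)) : Prop :=
  C ⊆ Γ ∧ ∀ w ∈ Γ, w.length = N → ∃ k : ℕ, w.drop k ∈ C

/-- The Hausdorff content of the tree `Γ` (of height `N`) with base `r` at dimension `γ`:
the minimum over cuts `C` of `∑_{Q ∈ C} r^{-height(Q) γ}`. -/
noncomputable def treeContent (r : ℕ) (γ : ℝ) (N : ℕ) (Γ : Finset (List ℕ)) : ℝ :=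
  sInf {x : ℝ | ∃ C : Finset (List ℕ), IsCut N Γ C ∧
    x = ∑ w ∈ C, (r : ℝ) ^ (-(w.length : ℝ) * γ)}

/-- The tree induced at the node `Q`: its nodes are the words `v` with `v ++ Q ∈ Γ`. -/
def inducedTree (Γ : Finset (List ℕ)) (Q : List ℕ) : Finset (List ℕ) :=
  (Γ.filter fun w => Q <:+ w).image fun w => w.take (w.length - Q.length)

lemma cut_self (N : ℕ) (Γ : Finset (List ℕ)) : IsCut N Γ Γ :=
  ⟨Finset.Subset.refl _, fun w hw _ => ⟨0, by simpa using hw⟩⟩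

lemma cutSet_finite (r : ℕ) (γ : ℝ) (N : ℕ) (Γ : Finset (List ℕ)) :
    {x : ℝ | ∃ C : Finset (List ℕ), IsCut N Γ C ∧
      x = ∑ w ∈ C, (r : ℝ) ^ (-(w.length : ℝ) * γ)}.Finite := by
  apply Set.Finite.subset ((Γ.powerset.finite_toSet).image
    (fun C => ∑ w ∈ C, (r : ℝ) ^ (-(w.length : ℝ) * γ)))
  rintro x ⟨C, hC, rfl⟩
  exact ⟨C, by simpa [Finset.mem_powerset] using hC.1, rfl⟩

lemma treeContent_spec (r : ℕ) (γ : ℝ) (N : ℕ) (Γ : Finset (List ℕ)) :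
    ∃ C, IsCut N Γ C ∧ treeContent r γ N Γ = ∑ w ∈ C, (r : ℝ) ^ (-(w.length : ℝ) * γ) := by
  have hne : {x : ℝ | ∃ C : Finset (List ℕ), IsCut N Γ C ∧
      x = ∑ w ∈ C, (r : ℝ) ^ (-(w.length : ℝ) * γ)}.Nonempty :=
    ⟨_, Γ, cut_self N Γ, rfl⟩
  exact Set.Nonempty.csInf_mem hne (cutSet_finite r γ N Γ)

lemma treeContent_le (r : ℕ) (γ : ℝ) (N : ℕ) (Γ C : Finset (List ℕ)) (h : IsCut N Γ C) :
    treeContent r γ N Γ ≤ ∑ w ∈ C, (r : ℝ) ^ (-(w.length : ℝ) * γ) :=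
  csInf_le ((cutSet_finite r γ N Γ).bddBelow) ⟨C, h, rfl⟩

lemma treeContent_nonneg (r : ℕ) (γ : ℝ) (N : ℕ) (Γ : Finset (List ℕ)) :
    0 ≤ treeContent r γ N Γ := by
  obtain ⟨C, -, hEq⟩ := treeContent_spec r γ N Γ
  rw [hEq]
  exact Finset.sum_nonneg fun w _ => Real.rpow_nonneg (by positivity) _

lemma mem_inducedTree_iff (Γ : Finset (List ℕ)) (Q v : List ℕ) :
    v ∈ inducedTree Γ Q ↔ v ++ Q ∈ Γ := by
  unfold inducedTree
  simp only [Finset.mem_image, Finset.mem_filter]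
  constructor
  · rintro ⟨w, ⟨hwΓ, u, rfl⟩, rfl⟩
    simpa [List.length_append, List.take_left] using hwΓ
  · intro h
    exact ⟨v ++ Q, ⟨h, v, rfl⟩, by simp [List.length_append, List.take_left]⟩

lemma drop_mem {N : ℕ} {Γ : Finset (List ℕ)} (hΓ : IsLTree N Γ) {w : List ℕ} (hw : w ∈ Γ)
    (k : ℕ) : w.drop k ∈ Γ := by
  induction k with
  | zero => simpa using hw
  | succ k ih =>
    rw [← List.tail_drop]
    by_cases h : w.drop k = []
    · rw [h]; exact hΓ.1
    · exact hΓ.2.2.1 _ ih h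

lemma children_nil_singleton {Γ : Finset (List ℕ)} {Q : List ℕ} (h : Q ∈ children Γ []) :
    ∃ a, Q = [a] := by
  rw [children, Finset.mem_filter] at h
  obtain ⟨-, hne, ht⟩ := h
  cases Q with
  | nil => exact absurd rfl hne
  | cons a t => exact ⟨a, by simp_all⟩

lemma subadd (r : ℕ) (hr : 2 ≤ r) (γ : ℝ) (N : ℕ) (hN : 1 ≤ N) (Γ : Finset (List ℕ))
    (hΓ : IsLTree N Γ) :
    treeContent r γ N Γ ≤
      (r : ℝ) ^ (-γ) * ∑ Q ∈ children Γ [], treeContent r γ (N - 1) (inducedTree Γ Q) := by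
  have hrpos : (0:ℝ) < r := by
    have : (2:ℝ) ≤ r := by exact_mod_cast hr
    linarith
  choose C hC hCE using fun Q => treeContent_spec r γ (N-1) (inducedTree Γ Q)
  set S := children Γ [] with hS
  set D := S.biUnion (fun Q => (C Q).image (· ++ Q)) with hDdef
  have hmemD : ∀ x, x ∈ D ↔ ∃ Q ∈ S, ∃ v ∈ C Q, v ++ Q = x := by
    intro x
    simp [hDdef, Finset.mem_biUnion, Finset.mem_image]
  have hcut : IsCut N Γ D := by
    constructor
    · intro x hx
      obtain ⟨Q, hQ, v, hv, rfl⟩ := (hmemD x).1 hx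
      exact (mem_inducedTree_iff Γ Q v).1 ((hC Q).1 hv)
    · intro w hw hwN
      have hwne : w ≠ [] := by
        intro h; rw [h] at hwN; simp at hwN; omega
      set a := w.getLast hwne with ha
      set v := w.dropLast with hv
      have hvw : v ++ [a] = w := List.dropLast_append_getLast hwne
      have hvlen : v.length = N - 1 := by
        rw [hv, List.length_dropLast, hwN]
      have hQmem : [a] ∈ S := by
        have hdrop : w.drop (N-1) = [a] := by
          conv_lhs => rw [← hvw]
          rw [← hvlen, List.drop_left]
        rw [hS, children, Finset.mem_filter]
        refine ⟨?_, by simp, by simp⟩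
        rw [← hdrop]; exact drop_mem hΓ hw _
      have hvmem : v ∈ inducedTree Γ [a] := by
        rw [mem_inducedTree_iff, hvw]; exact hw
      obtain ⟨k, hk⟩ := (hC [a]).2 v hvmem hvlen
      refine ⟨min k (N-1), ?_⟩
      have h1 : v.drop (min k (N-1)) = v.drop k := by
        rcases le_total k (N-1) with h | h
        · rw [min_eq_left h]
        · rw [min_eq_right h, List.drop_eq_nil_of_le (by omega),
            List.drop_eq_nil_of_le (by omega)]
      have h2 : w.drop (min k (N-1)) = v.drop (min k (N-1)) ++ [a] := by
        conv_lhs => rw [← hvw]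
        exact List.drop_append_of_le_length (by omega)
      rw [h2, h1]
      exact (hmemD _).2 ⟨[a], hQmem, v.drop k, hk, rfl⟩
  have hdisj : (↑S : Set (List ℕ)).PairwiseDisjoint (fun Q => (C Q).image (· ++ Q)) := by
    intro Q hQ Q' hQ' hne
    simp only [Function.onFun]
    rw [Finset.disjoint_left]
    rintro x hx hx'
    obtain ⟨v, hv, rfl⟩ := Finset.mem_image.1 hx
    obtain ⟨v', hv', hEq⟩ := Finset.mem_image.1 hx'
    obtain ⟨b, rfl⟩ := children_nil_singleton (by exact hQ)
    obtain ⟨b', rfl⟩ := children_nil_singleton (by exact hQ')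
    apply hne
    have hb : (v' ++ [b']).getLast? = (v ++ [b]).getLast? := by rw [hEq]
    simp at hb
    rw [hb]
  have hsum : ∑ x ∈ D, (r:ℝ) ^ (-(x.length:ℝ) * γ)
      = (r:ℝ) ^ (-γ) * ∑ Q ∈ S, treeContent r γ (N-1) (inducedTree Γ Q) := by
    rw [hDdef, Finset.sum_biUnion hdisj, Finset.mul_sum]
    apply Finset.sum_congr rfl
    intro Q hQ
    obtain ⟨b, rfl⟩ := children_nil_singleton (by exact hQ)
    rw [Finset.sum_image (by intro x _ y _ h; simpa using h), hCE [b], Finset.mul_sum]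
    apply Finset.sum_congr rfl
    intro v _
    rw [← Real.rpow_add hrpos]
    congr 1
    simp [List.length_append]
    ring
  rw [← hsum]
  exact treeContent_le r γ N Γ D hcut


/-- Tree dichotomy: with `A = γ₅ - γ₄ + log_r 2` and `B = γ₄ - γ₃ - log_r 2 > 0`, if every node
of `Γ` has at most `r^{γ₅}` children, then either at least `r^{γ₃}` children `Q` of the root
satisfy `H_r^{γ₄}(Γ_Q) ≥ H_r^{γ₄}(Γ) r^{-A}`, or some child `Q` of the root satisfies
`H_r^{γ₄}(Γ_Q) ≥ H_r^{γ₄}(Γ) r^{B}`. -/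
theorem stmt8 (r : ℕ) (hr : 2 ≤ r) (γ₃ γ₄ γ₅ : ℝ)
    (h3 : 0 < γ₃) (h34 : γ₃ < γ₄) (h45 : γ₄ < γ₅)
    (hB : 0 < γ₄ - γ₃ - Real.log 2 / Real.log r)
    (N : ℕ) (hN : 1 ≤ N) (Γ : Finset (List ℕ)) (hΓ : IsLTree N Γ)
    (hchild : ∀ w ∈ Γ, ((children Γ w).card : ℝ) ≤ (r : ℝ) ^ γ₅) :
    (r : ℝ) ^ γ₃ ≤
        (({Q ∈ (children Γ [] : Set (List ℕ)) |
          treeContent r γ₄ N Γ * (r : ℝ) ^ (-(γ₅ - γ₄ + Real.log 2 / Real.log r)) ≤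
            treeContent r γ₄ (N - 1) (inducedTree Γ Q)}).ncard : ℝ) ∨
    ∃ Q ∈ children Γ [],
      treeContent r γ₄ N Γ * (r : ℝ) ^ (γ₄ - γ₃ - Real.log 2 / Real.log r) ≤
        treeContent r γ₄ (N - 1) (inducedTree Γ Q) := by
  classical
  have hrpos : (0:ℝ) < r := by
    have : (2:ℝ) ≤ r := by exact_mod_cast hr
    linarith
  have hr1 : (1:ℝ) < r := by
    have : (2:ℝ) ≤ r := by exact_mod_cast hr
    linarith
  have hrL : (r:ℝ) ^ (Real.log 2 / Real.log r) = 2 := by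
    rw [Real.rpow_def_of_pos hrpos]
    have hlogr : Real.log r ≠ 0 := ne_of_gt (Real.log_pos hr1)
    have h2 : Real.log r * (Real.log 2 / Real.log r) = Real.log 2 := by field_simp
    rw [h2, Real.exp_log two_pos]
  have hrLinv : (r:ℝ) ^ (-(Real.log 2 / Real.log r)) = 1/2 := by
    rw [Real.rpow_neg hrpos.le, hrL]; norm_num
  have hmul : ∀ x y : ℝ, (r:ℝ)^x * (r:ℝ)^y = (r:ℝ)^(x+y) :=
    fun x y => (Real.rpow_add hrpos x y).symm
  obtain ⟨a0, ha0⟩ := hΓ.2.2.2 [] hΓ.1 (by simp; omega)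
  have hQ0 : [a0] ∈ children Γ [] := by
    rw [children, Finset.mem_filter]; exact ⟨ha0, by simp, rfl⟩
  by_cases hHpos : 0 < treeContent r γ₄ N Γ
  · by_contra hcon
    push_neg at hcon
    obtain ⟨h1, h2⟩ := hcon
    set L := Real.log 2 / Real.log r with hLdef
    set p : List ℕ → Prop := fun Q =>
      treeContent r γ₄ N Γ * (r : ℝ) ^ (-(γ₅ - γ₄ + L)) ≤
        treeContent r γ₄ (N - 1) (inducedTree Γ Q) with hpdef
    have hset : {Q ∈ (children Γ [] : Set (List ℕ)) | p Q}
        = ↑((children Γ []).filter p) := (Finset.coe_filter _ _).symm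
    rw [hset, Set.ncard_coe_finset] at h1
    -- h1 : (card filter : ℝ) < r ^ γ₃
    have hcard : ((children Γ []).card : ℝ) ≤ (r:ℝ) ^ γ₅ := hchild [] hΓ.1
    have hkey := subadd r hr γ₄ N hN Γ hΓ
    set H := treeContent r γ₄ N Γ with hHdef
    have hTlt : ∑ Q ∈ children Γ [], treeContent r γ₄ (N-1) (inducedTree Γ Q)
        < ∑ Q ∈ children Γ [],
            (if p Q then H * (r:ℝ)^(γ₄-γ₃-L) else H * (r:ℝ)^(-(γ₅-γ₄+L))) := by
      apply Finset.sum_lt_sum_of_nonempty ⟨[a0], hQ0⟩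
      intro Q hQ
      by_cases hpQ : p Q
      · rw [if_pos hpQ]; exact h2 Q hQ
      · rw [if_neg hpQ]; exact lt_of_not_ge hpQ
    have hsplit : ∑ Q ∈ children Γ [],
          (if p Q then H * (r:ℝ)^(γ₄-γ₃-L) else H * (r:ℝ)^(-(γ₅-γ₄+L)))
        = (((children Γ []).filter p).card : ℝ) * (H * (r:ℝ)^(γ₄-γ₃-L))
          + (((children Γ []).filter (fun Q => ¬ p Q)).card : ℝ)
              * (H * (r:ℝ)^(-(γ₅-γ₄+L))) := by
      rw [Finset.sum_ite, Finset.sum_const, Finset.sum_const, nsmul_eq_mul, nsmul_eq_mul]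
    have hpos1 : (0:ℝ) < H * (r:ℝ)^(γ₄-γ₃-L) := by
      apply mul_pos hHpos (Real.rpow_pos_of_pos hrpos _)
    have hpos2 : (0:ℝ) < H * (r:ℝ)^(-(γ₅-γ₄+L)) := by
      apply mul_pos hHpos (Real.rpow_pos_of_pos hrpos _)
    have hc2 : (((children Γ []).filter (fun Q => ¬ p Q)).card : ℝ) ≤ (r:ℝ)^γ₅ :=
      le_trans (by exact_mod_cast Finset.card_le_card (Finset.filter_subset _ _)) hcard
    have hbound : ∑ Q ∈ children Γ [],
          (if p Q then H * (r:ℝ)^(γ₄-γ₃-L) else H * (r:ℝ)^(-(γ₅-γ₄+L)))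
        ≤ (r:ℝ)^γ₃ * (H * (r:ℝ)^(γ₄-γ₃-L)) + (r:ℝ)^γ₅ * (H * (r:ℝ)^(-(γ₅-γ₄+L))) := by
      rw [hsplit]
      gcongr
    have hfinal : (r:ℝ)^(-γ₄) * ((r:ℝ)^γ₃ * (H * (r:ℝ)^(γ₄-γ₃-L))
        + (r:ℝ)^γ₅ * (H * (r:ℝ)^(-(γ₅-γ₄+L)))) = H := by
      have e1 : (r:ℝ)^(-γ₄) * ((r:ℝ)^γ₃ * (H * (r:ℝ)^(γ₄-γ₃-L))) = H * (r:ℝ)^(-L) := by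
        calc (r:ℝ)^(-γ₄) * ((r:ℝ)^γ₃ * (H * (r:ℝ)^(γ₄-γ₃-L)))
            = H * ((r:ℝ)^(-γ₄) * (r:ℝ)^γ₃ * (r:ℝ)^(γ₄-γ₃-L)) := by ring
          _ = H * (r:ℝ)^((-γ₄ + γ₃) + (γ₄-γ₃-L)) := by rw [hmul, hmul]
          _ = H * (r:ℝ)^(-L) := by rw [show (-γ₄ + γ₃) + (γ₄-γ₃-L) = -L by ring]
      have e2 : (r:ℝ)^(-γ₄) * ((r:ℝ)^γ₅ * (H * (r:ℝ)^(-(γ₅-γ₄+L)))) = H * (r:ℝ)^(-L) := by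
        calc (r:ℝ)^(-γ₄) * ((r:ℝ)^γ₅ * (H * (r:ℝ)^(-(γ₅-γ₄+L))))
            = H * ((r:ℝ)^(-γ₄) * (r:ℝ)^γ₅ * (r:ℝ)^(-(γ₅-γ₄+L))) := by ring
          _ = H * (r:ℝ)^((-γ₄ + γ₅) + (-(γ₅-γ₄+L))) := by rw [hmul, hmul]
          _ = H * (r:ℝ)^(-L) := by rw [show (-γ₄ + γ₅) + (-(γ₅-γ₄+L)) = -L by ring]
      rw [mul_add, e1, e2, hrLinv]
      ring
    have hlt : H < H := by
      calc H ≤ (r:ℝ)^(-γ₄) * ∑ Q ∈ children Γ [],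
              treeContent r γ₄ (N-1) (inducedTree Γ Q) := hkey
        _ < (r:ℝ)^(-γ₄) * ((r:ℝ)^γ₃ * (H * (r:ℝ)^(γ₄-γ₃-L))
              + (r:ℝ)^γ₅ * (H * (r:ℝ)^(-(γ₅-γ₄+L)))) := by
            apply mul_lt_mul_of_pos_left (lt_of_lt_of_le hTlt hbound)
              (Real.rpow_pos_of_pos hrpos _)
        _ = H := hfinal
    exact absurd hlt (lt_irrefl H)
  · right
    refine ⟨[a0], hQ0, ?_⟩
    have hH0 : treeContent r γ₄ N Γ ≤ 0 := not_lt.1 hHpos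
    have hnn := treeContent_nonneg r γ₄ (N-1) (inducedTree Γ [a0])
    have : treeContent r γ₄ N Γ * (r:ℝ)^(γ₄-γ₃-Real.log 2/Real.log r) ≤ 0 :=
      mul_nonpos_of_nonpos_of_nonneg hH0 (Real.rpow_nonneg hrpos.le _)
    linarith
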